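/- In a free group, if two elements u and v commute, then they are both powers of a common element. -/

import Mathlib

open FreeGroup

private lemma of_comm_eq {β : Type*} {a b : β}
    (h : FreeGroup.of a * FreeGroup.of b = FreeGroup.of b * FreeGroup.of a) : a = b := by
  by_contra hab
  classical
  set f : FreeGroup β →* FreeGroup Bool :=
    FreeGroup.lift (fun x => if x = a then FreeGroup.of true else FreeGroup.of false) with hf
  have hfa := congrArg f h
  rw [_root_.map_mul, _root_.map_mul, hf] at hfa
  simp only [FreeGroup.lift_apply_of] at hfa
  rw [if_pos trivial, if_neg (Ne.symm hab)] at hfa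
  have : (FreeGroup.of true * FreeGroup.of false : FreeGroup Bool)
      = FreeGroup.of false * FreeGroup.of true := hfa
  revert this
  decide

private lemma eq_one_of_isEmpty {ι : Type*} [IsEmpty ι] (g : FreeGroup ι) : g = 1 := by
  induction g using FreeGroup.induction_on with
  | C1 => rfl
  | of x => exact isEmptyElim x
  | inv_of x ih => exact isEmptyElim x
  | mul x y ihx ihy => rw [ihx, ihy, one_mul]

private lemma exists_zpow_of_subsingleton {ι : Type*} [Subsingleton ι] (x : ι)
    (g : FreeGroup ι) : ∃ k : ℤ, g = FreeGroup.of x ^ k := by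
  induction g using FreeGroup.induction_on with
  | C1 => exact ⟨0, rfl⟩
  | of y => exact ⟨1, by rw [zpow_one, Subsingleton.elim y x]⟩
  | inv_of y ih => obtain ⟨k, hk⟩ := ih; exact ⟨-k, by rw [hk, zpow_neg]⟩
  | mul y z ihy ihz =>
      obtain ⟨k, hk⟩ := ihy; obtain ⟨l, hl⟩ := ihz
      exact ⟨k + l, by rw [hk, hl, zpow_add]⟩

/-- In a free group, two commuting elements are powers of a common element. -/
theorem freeGroup_commute_common_power {α : Type*} (u v : FreeGroup α)
    (h : u * v = v * u) :
    ∃ (z : FreeGroup α) (m n : ℤ), u = z ^ m ∧ v = z ^ n := by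
  set H : Subgroup (FreeGroup α) := Subgroup.closure {u, v} with hH
  have hu : u ∈ H := Subgroup.subset_closure (by simp)
  have hv : v ∈ H := Subgroup.subset_closure (by simp)
  have key : ∀ a b : FreeGroup α, a ∈ ({u, v} : Set (FreeGroup α)) →
      b ∈ ({u, v} : Set (FreeGroup α)) → Commute a b := by
    rintro a b (rfl | rfl) (rfl | rfl) <;> first | rfl | exact h | exact h.symm
  have h1 : ∀ y ∈ H, ∀ a ∈ ({u, v} : Set (FreeGroup α)), Commute a y := fun y hy =>
    Subgroup.closure_induction
      (fun b hb a ha => key a b ha hb)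
      (fun a _ => Commute.one_right a)
      (fun b c _ _ hb hc a ha => (hb a ha).mul_right (hc a ha))
      (fun b _ hb a ha => (hb a ha).inv_right) hy
  have hcomm : ∀ x ∈ H, ∀ y ∈ H, Commute x y := fun x hx y hy =>
    Subgroup.closure_induction
      (fun a ha => h1 y hy a ha)
      (Commute.one_left y)
      (fun a c _ _ ha hc => ha.mul_left hc)
      (fun a _ ha => ha.inv_left) hx
  have : IsFreeGroup H := inferInstance
  let e : H ≃* FreeGroup (IsFreeGroup.Generators H) := IsFreeGroup.toFreeGroup H
  have hsub : Subsingleton (IsFreeGroup.Generators H) := by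
    constructor
    intro a b
    apply of_comm_eq (a := a) (b := b)
    have hc := hcomm (e.symm (FreeGroup.of a)) (e.symm (FreeGroup.of a)).2
      (e.symm (FreeGroup.of b)) (e.symm (FreeGroup.of b)).2
    have h2 : e.symm (FreeGroup.of a) * e.symm (FreeGroup.of b)
        = e.symm (FreeGroup.of b) * e.symm (FreeGroup.of a) := Subtype.ext hc.eq
    have h3 := congrArg e h2
    simpa using h3
  rcases isEmpty_or_nonempty (IsFreeGroup.Generators H) with he | ⟨⟨x⟩⟩
  · refine ⟨1, 0, 0, ?_, ?_⟩
    · have h1u := eq_one_of_isEmpty (e ⟨u, hu⟩)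
      have h2u := congrArg e.symm h1u
      simp only [MulEquiv.symm_apply_apply, _root_.map_one] at h2u
      simpa [Subtype.ext_iff] using h2u
    · have h1v := eq_one_of_isEmpty (e ⟨v, hv⟩)
      have h2v := congrArg e.symm h1v
      simp only [MulEquiv.symm_apply_apply, _root_.map_one] at h2v
      simpa [Subtype.ext_iff] using h2v
  · obtain ⟨m, hm⟩ := exists_zpow_of_subsingleton x (e ⟨u, hu⟩)
    obtain ⟨n, hn⟩ := exists_zpow_of_subsingleton x (e ⟨v, hv⟩)
    refine ⟨(e.symm (FreeGroup.of x) : FreeGroup α), m, n, ?_, ?_⟩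
    · have h2 := congrArg e.symm hm
      simp only [MulEquiv.symm_apply_apply, _root_.map_zpow] at h2
      simpa [Subtype.ext_iff, SubgroupClass.coe_zpow] using h2
    · have h2 := congrArg e.symm hn
      simp only [MulEquiv.symm_apply_apply, _root_.map_zpow] at h2
      simpa [Subtype.ext_iff, SubgroupClass.coe_zpow] using h2
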